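/- Let R be a ring of the form S/J with S = k[x_1,...,x_d] a polynomial ring over a field k of prime characteristic and J a monomial ideal. Then for any ideal I of R, the tight closure satisfies I* = ∩_P (I + P), where P ranges over the minimal primes of R. -/

import Mathlib

open MvPolynomial

/-- The Frobenius power `I^{[q]}`: the ideal generated by the `q`-th powers of the elements
of `I`. -/
def frobeniusPower {R : Type*} [CommRing R] (I : Ideal R) (q : ℕ) : Ideal R :=
  Ideal.span ((fun r => r ^ q) '' (I : Set R))

/-- The tight closure `I*` of an ideal `I` in a ring of characteristic `p`. -/
def tightClosureSet {R : Type*} [CommRing R] (p : ℕ) (I : Ideal R) : Set R :=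
  { z | ∃ c : R, (∀ P ∈ minimalPrimes R, c ∉ P) ∧
      ∃ N : ℕ, ∀ e ≥ N, c * z ^ p ^ e ∈ frobeniusPower I (p ^ e) }

section Decomposition

variable (k : Type*) [Field k] (σ : Type*) (p : ℕ) [Fact p.Prime] [CharP k p] (e : ℕ)

/-- The index type for the basis of `k[x]` over the image of the `e`-th iterated Frobenius. -/
abbrev FrobIdx : Type _ :=
  (Module.Basis.ofVectorSpaceIndex ((iterateFrobenius k p e).fieldRange) k) ×
    {r : σ →₀ ℕ // ∀ i, r i < p ^ e}

/-- The additive map `(g : ι →₀ T) ↦ ∑ (g x)^q • B x`. -/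
noncomputable def PhiHom : (FrobIdx k σ p e →₀ MvPolynomial σ k) →+ MvPolynomial σ k :=
  Finsupp.liftAddHom fun x =>
    { toFun := fun t => t ^ p ^ e * monomial x.2.1 (x.1 : k)
      map_zero' := by
        show (0 : MvPolynomial σ k) ^ p ^ e * _ = 0
        rw [zero_pow (pow_ne_zero e (Fact.out : p.Prime).ne_zero), zero_mul]
      map_add' := fun a b => by
        show (a + b) ^ p ^ e * _ = _
        rw [add_pow_char_pow, add_mul] }

variable {k σ p e}

lemma PhiHom_apply (g : FrobIdx k σ p e →₀ MvPolynomial σ k) :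
    PhiHom k σ p e g = g.sum fun x t => t ^ p ^ e * monomial x.2.1 (x.1 : k) := by
  rw [PhiHom, Finsupp.liftAddHom_apply]; rfl

lemma PhiHom_single (x : FrobIdx k σ p e) (t : MvPolynomial σ k) :
    PhiHom k σ p e (Finsupp.single x t) = t ^ p ^ e * monomial x.2.1 (x.1 : k) := by
  rw [PhiHom, Finsupp.liftAddHom_apply_single]; rfl

end Decomposition


section CoeffLemmas

variable {k : Type*} [Field k] {σ : Type*} {p : ℕ} [Fact p.Prime] [CharP k p] {e : ℕ}

lemma expand_monomial' {q : ℕ} (hq : q ≠ 0) (s : σ →₀ ℕ) (a : k) :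
    expand q (monomial s a) = monomial (q • s) a := by
  rw [expand_monomial, monomial_eq, Finsupp.prod, Finsupp.support_smul_eq hq]

lemma coeff_expand_smul {q : ℕ} (hq : q ≠ 0) (f : MvPolynomial σ k) (u : σ →₀ ℕ) :
    coeff (q • u) (expand q f) = coeff u f := by
  classical
  induction f using MvPolynomial.induction_on' with
  | monomial s a =>
    rw [expand_monomial' hq, coeff_monomial, coeff_monomial]
    by_cases h : s = u
    · simp [h]
    · have hinj : q • s = q • u → s = u := fun hc => Finsupp.ext fun i =>
        Nat.eq_of_mul_eq_mul_left (Nat.pos_of_ne_zero hq)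
          (by simpa [Finsupp.smul_apply] using DFunLike.congr_fun hc i)
      rw [if_neg (fun hc => h (hinj hc)), if_neg h]
  | add f g hf hg => rw [map_add, coeff_add, coeff_add, hf, hg]

lemma coeff_expand_ndvd {q : ℕ} (hq : q ≠ 0) (f : MvPolynomial σ k) (t : σ →₀ ℕ)
    (i : σ) (h : ¬ q ∣ t i) : coeff t (expand q f) = 0 := by
  classical
  induction f using MvPolynomial.induction_on' with
  | monomial s a =>
    rw [expand_monomial' hq, coeff_monomial, if_neg]
    intro hc
    subst hc
    exact h ⟨s i, by rw [Finsupp.smul_apply, smul_eq_mul]⟩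
  | add f g hf hg => rw [map_add, coeff_add, hf, hg, add_zero]

lemma pow_pe_eq (f : MvPolynomial σ k) :
    f ^ p ^ e = expand (p ^ e) (map (iterateFrobenius k p e) f) := by
  have h : (iterateFrobenius (MvPolynomial σ k) p e) =
      (((expand (p ^ e) : MvPolynomial σ k →ₐ[k] MvPolynomial σ k) :
        MvPolynomial σ k →+* MvPolynomial σ k).comp (map (iterateFrobenius k p e))) := by
    apply ringHom_ext
    · intro a
      rw [RingHom.comp_apply, iterateFrobenius_def]
      show (C a : MvPolynomial σ k) ^ p ^ e = expand (p ^ e) (map (iterateFrobenius k p e) (C a))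
      rw [map_C, expand_C, iterateFrobenius_def, map_pow]
    · intro i
      rw [RingHom.comp_apply, iterateFrobenius_def]
      show (X i : MvPolynomial σ k) ^ p ^ e = expand (p ^ e) (map (iterateFrobenius k p e) (X i))
      rw [map_X, expand_X]
  calc f ^ p ^ e = iterateFrobenius (MvPolynomial σ k) p e f := (iterateFrobenius_def p e f).symm
    _ = expand (p ^ e) (map (iterateFrobenius k p e) f) := by rw [h]; rfl

lemma coeff_pow_pe_smul (f : MvPolynomial σ k) (u : σ →₀ ℕ) :
    coeff (p ^ e • u) (f ^ p ^ e) = (coeff u f) ^ p ^ e := by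
  rw [pow_pe_eq, coeff_expand_smul (pow_ne_zero e (Fact.out : p.Prime).ne_zero),
    coeff_map, iterateFrobenius_def]

lemma coeff_pow_pe_ndvd (f : MvPolynomial σ k) (t : σ →₀ ℕ) (i : σ) (h : ¬ p ^ e ∣ t i) :
    coeff t (f ^ p ^ e) = 0 := by
  rw [pow_pe_eq, coeff_expand_ndvd (pow_ne_zero e (Fact.out : p.Prime).ne_zero) _ t i h]

end CoeffLemmas

section Core

variable {k : Type*} [Field k] {σ : Type*} {p : ℕ} [Fact p.Prime] [CharP k p] {e : ℕ}

lemma nat_aux {q b c A m : ℕ} (hb : b < q) (hc : c < q) (hne : c ≠ b)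
    (hle : c ≤ q * A + b) (hm : q * A + b - c = q * m) : False := by
  have E : q * A + b = q * m + c := by omega
  rcases le_total A m with h | h
  · obtain ⟨D, rfl⟩ : ∃ D, m = A + D := ⟨m - A, by omega⟩
    rw [Nat.mul_add] at E
    rcases Nat.eq_zero_or_pos D with h0 | h0
    · subst h0; simp at E; omega
    · have : q ≤ q * D := Nat.le_mul_of_pos_right q h0
      omega
  · obtain ⟨D, rfl⟩ : ∃ D, A = m + D := ⟨A - m, by omega⟩
    rw [Nat.mul_add] at E
    rcases Nat.eq_zero_or_pos D with h0 | h0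
    · subst h0; simp at E; omega
    · have : q ≤ q * D := Nat.le_mul_of_pos_right q h0
      omega

lemma coeff_pow_mul_monomial_eq (t : MvPolynomial σ k) (u : σ →₀ ℕ) (r₀ : σ →₀ ℕ) (a : k) :
    MvPolynomial.coeff (p ^ e • u + r₀) (t ^ p ^ e * MvPolynomial.monomial r₀ a) =
      (MvPolynomial.coeff u t) ^ p ^ e * a := by
  classical
  rw [MvPolynomial.coeff_mul_monomial', if_pos le_add_self, add_tsub_cancel_right,
    coeff_pow_pe_smul]

lemma coeff_pow_mul_monomial_ne (t : MvPolynomial σ k) (u : σ →₀ ℕ) {r r₀ : σ →₀ ℕ}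
    (hr : ∀ i, r i < p ^ e) (hr₀ : ∀ i, r₀ i < p ^ e) (hne : r ≠ r₀) (a : k) :
    MvPolynomial.coeff (p ^ e • u + r₀) (t ^ p ^ e * MvPolynomial.monomial r a) = 0 := by
  classical
  rw [MvPolynomial.coeff_mul_monomial']
  by_cases hle : r ≤ p ^ e • u + r₀
  · rw [if_pos hle]
    obtain ⟨i, hi⟩ : ∃ i, r i ≠ r₀ i := by
      by_contra hcon; push_neg at hcon; exact hne (Finsupp.ext hcon)
    have hnd : ¬ p ^ e ∣ ((p ^ e • u + r₀ - r) i) := by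
      have h1 : r i ≤ p ^ e * u i + r₀ i := by
        simpa [Finsupp.smul_apply] using (Finsupp.le_def.mp hle i)
      have h2 : (p ^ e • u + r₀ - r) i = p ^ e * u i + r₀ i - r i := by
        simp [Finsupp.tsub_apply, Finsupp.add_apply, Finsupp.smul_apply]
      rw [h2]
      rintro ⟨m, hm⟩
      exact nat_aux (hr₀ i) (hr i) hi h1 hm
    rw [coeff_pow_pe_ndvd _ _ i hnd, zero_mul]
  · rw [if_neg hle]

lemma PhiHom_eq_zero {g : FrobIdx k σ p e →₀ MvPolynomial σ k}
    (H : PhiHom k σ p e g = 0) : g = 0 := by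
  classical
  refine Finsupp.ext fun x₀ => ?_
  by_cases hsupp : x₀ ∈ g.support
  swap
  · exact Finsupp.notMem_support_iff.mp hsupp
  show g x₀ = 0
  refine MvPolynomial.ext _ _ fun u => ?_
  rw [MvPolynomial.coeff_zero]
  have hco := congrArg (MvPolynomial.coeff (p ^ e • u + x₀.2.1)) H
  rw [MvPolynomial.coeff_zero, PhiHom_apply, Finsupp.sum, MvPolynomial.coeff_sum] at hco
  rw [← Finset.sum_filter_add_sum_filter_not g.support (fun x => x.2.1 = x₀.2.1)] at hco
  have h2 : ∑ x ∈ g.support.filter (fun x => ¬ x.2.1 = x₀.2.1),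
      MvPolynomial.coeff (p ^ e • u + x₀.2.1) ((g x) ^ p ^ e
        * MvPolynomial.monomial x.2.1 (x.1 : k)) = 0 :=
    Finset.sum_eq_zero fun x hx =>
      coeff_pow_mul_monomial_ne (g x) u x.2.2 x₀.2.2 (Finset.mem_filter.mp hx).2 _
  rw [h2, add_zero] at hco
  set s := g.support.filter (fun x => x.2.1 = x₀.2.1) with hs
  have hterm_eq : ∀ x ∈ s, MvPolynomial.coeff (p ^ e • u + x₀.2.1) ((g x) ^ p ^ e
      * MvPolynomial.monomial x.2.1 (x.1 : k))
      = (MvPolynomial.coeff u (g x)) ^ p ^ e * (x.1 : k) := by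
    intro x hx
    rw [(Finset.mem_filter.mp hx).2]
    exact coeff_pow_mul_monomial_eq (g x) u x₀.2.1 _
  rw [Finset.sum_congr rfl hterm_eq] at hco
  have hre : ∀ x ∈ s, x = (x.1, x₀.2) := by
    intro x hx
    exact Prod.ext rfl (Subtype.ext (Finset.mem_filter.mp hx).2)
  have himg : ∑ j ∈ s.image Prod.fst,
      ((MvPolynomial.coeff u (g (j, x₀.2))) ^ p ^ e * (j : k)) = 0 := by
    rw [Finset.sum_image (fun x hx y hy hxy => by rw [hre x hx, hre y hy, hxy]), ← hco]
    apply Finset.sum_congr rfl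
    intro x hx
    conv_rhs => rw [hre x hx]
  set K := (iterateFrobenius k p e).fieldRange
  set B := Module.Basis.ofVectorSpace K k with hB
  have hmem : ∀ j, ((MvPolynomial.coeff u (g (j, x₀.2))) ^ p ^ e) ∈ K :=
    fun j => RingHom.mem_fieldRange.mpr ⟨MvPolynomial.coeff u (g (j, x₀.2)),
      iterateFrobenius_def p e _⟩
  have hli := linearIndependent_iff'.mp B.linearIndependent (s.image Prod.fst)
    (fun j => (⟨_, hmem j⟩ : K)) ?_ x₀.1 ?_
  · have hz : (MvPolynomial.coeff u (g (x₀.1, x₀.2))) ^ p ^ e = 0 := congrArg Subtype.val hli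
    rw [Prod.mk.eta] at hz
    exact pow_eq_zero_iff (pow_ne_zero e (Fact.out : p.Prime).ne_zero) |>.mp hz
  · rw [← himg]
    apply Finset.sum_congr rfl
    intro j _
    rw [hB, Module.Basis.ofVectorSpace_apply_self]
    rfl
  · refine Finset.mem_image.mpr ⟨x₀, ?_, rfl⟩
    rw [hs, Finset.mem_filter]
    exact ⟨hsupp, rfl⟩

lemma PhiHom_injective : Function.Injective (PhiHom k σ p e) := by
  intro a b hab
  have : PhiHom k σ p e (a - b) = 0 := by rw [map_sub, hab, sub_self]
  have := PhiHom_eq_zero this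
  exact sub_eq_zero.mp (by rwa [sub_eq_zero] at this ⊢)

lemma PhiHom_surjective : Function.Surjective (PhiHom k σ p e) := by
  classical
  intro f
  induction f using MvPolynomial.induction_on' with
  | add f g hf hg =>
    obtain ⟨a, ha⟩ := hf; obtain ⟨b, hb⟩ := hg
    exact ⟨a + b, by rw [map_add, ha, hb]⟩
  | monomial s a =>
    have hq : p ^ e ≠ 0 := pow_ne_zero e (Fact.out : p.Prime).ne_zero
    set r : {r : σ →₀ ℕ // ∀ i, r i < p ^ e} :=
      ⟨s.mapRange (· % p ^ e) (Nat.zero_mod _), fun i => by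
        simpa [Finsupp.mapRange_apply] using Nat.mod_lt (s i) (Nat.pos_of_ne_zero hq)⟩
      with hrdef
    set s₁ : σ →₀ ℕ := s.mapRange (· / p ^ e) (Nat.zero_div _) with hs₁
    have hsum : p ^ e • s₁ + r.1 = s := Finsupp.ext fun i => by
      simp only [Finsupp.add_apply, Finsupp.smul_apply, hs₁, hrdef, Finsupp.mapRange_apply,
        smul_eq_mul]
      exact Nat.div_add_mod (s i) (p ^ e)
    set K := (iterateFrobenius k p e).fieldRange
    set B := Module.Basis.ofVectorSpace K k with hB
    set w := B.repr a with hw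
    have hx : ∀ ν : K, ∃ y : k, y ^ p ^ e = (ν : k) := fun ν => by
      obtain ⟨y, hy⟩ := RingHom.mem_fieldRange.mp ν.2
      exact ⟨y, by rw [← iterateFrobenius_def p e y]; exact hy⟩
    choose rt hrt using hx
    refine ⟨w.sum fun j ν =>
      Finsupp.single ((j, r) : FrobIdx k σ p e) (MvPolynomial.monomial s₁ (rt ν)), ?_⟩
    rw [map_finsuppSum]
    have hterm : ∀ (j) (ν : K),
        PhiHom k σ p e (Finsupp.single ((j, r) : FrobIdx k σ p e)
          (MvPolynomial.monomial s₁ (rt ν)))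
        = MvPolynomial.monomial s ((ν : k) * (j : k)) := by
      intro j ν
      rw [PhiHom_single, MvPolynomial.monomial_pow, MvPolynomial.monomial_mul, hrt, hsum]
    have h1 : (w.sum fun j ν => PhiHom k σ p e
        (Finsupp.single ((j, r) : FrobIdx k σ p e) (MvPolynomial.monomial s₁ (rt ν))))
        = w.sum fun j ν => MvPolynomial.monomial s ((ν : k) * (j : k)) := by
      rw [Finsupp.sum, Finsupp.sum]
      exact Finset.sum_congr rfl fun j _ => hterm j (w j)
    rw [h1]
    have : (w.sum fun j ν => MvPolynomial.monomial s ((ν : k) * (j : k)))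
        = MvPolynomial.monomial s (w.sum fun j ν => (ν : k) * (j : k)) :=
      (map_finsuppSum (MvPolynomial.monomial s : k →ₗ[k] MvPolynomial σ k) w _).symm
    rw [this]
    congr 1
    have := B.linearCombination_repr a
    rw [Finsupp.linearCombination_apply] at this
    rw [← hw] at this
    rw [← this]
    rw [Finsupp.sum, Finsupp.sum]
    apply Finset.sum_congr rfl
    intro j _
    rw [hB, Module.Basis.ofVectorSpace_apply_self]
    rfl

end Core

section KeyLemma

variable {k : Type*} [Field k] {σ : Type*} {p : ℕ} [Fact p.Prime] [CharP k p] {e : ℕ}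

lemma PhiHom_smul (a : MvPolynomial σ k) (g : FrobIdx k σ p e →₀ MvPolynomial σ k) :
    PhiHom k σ p e (a • g) = a ^ p ^ e * PhiHom k σ p e g := by
  induction g using Finsupp.induction with
  | zero => rw [smul_zero, map_zero, mul_zero]
  | single_add x b f hx hb ih =>
    rw [smul_add, map_add, map_add, ih, Finsupp.smul_single, smul_eq_mul, PhiHom_single,
      PhiHom_single, mul_pow]
    ring

lemma PhiHom_smul_rep (I : Ideal (MvPolynomial σ k)) (t : MvPolynomial σ k)
    (g : FrobIdx k σ p e →₀ MvPolynomial σ k) (hg : ∀ x, g x ∈ I) :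
    ∃ g' : FrobIdx k σ p e →₀ MvPolynomial σ k,
      (∀ x, g' x ∈ I) ∧ PhiHom k σ p e g' = t * PhiHom k σ p e g := by
  have hsurj := fun x : FrobIdx k σ p e =>
    PhiHom_surjective (k := k) (σ := σ) (p := p) (e := e)
      (t * MvPolynomial.monomial x.2.1 (x.1 : k))
  choose h hh using hsurj
  refine ⟨g.sum fun x s => s • h x, ?_, ?_⟩
  · intro y
    rw [Finsupp.sum_apply]
    apply Ideal.sum_mem
    intro x _
    show ((g x) • h x) y ∈ I
    rw [Finsupp.smul_apply, smul_eq_mul]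
    exact Ideal.mul_mem_right _ _ (hg x)
  · rw [map_finsuppSum]
    have h1 : (g.sum fun x s => PhiHom k σ p e (s • h x))
        = g.sum fun x s => s ^ p ^ e * (t * MvPolynomial.monomial x.2.1 (x.1 : k)) := by
      rw [Finsupp.sum, Finsupp.sum]
      exact Finset.sum_congr rfl fun x _ => by rw [PhiHom_smul, hh x]
    rw [h1, PhiHom_apply, Finsupp.sum, Finsupp.sum, Finset.mul_sum]
    exact Finset.sum_congr rfl fun x _ => by ring

lemma rep_of_mem_frobPow (I : Ideal (MvPolynomial σ k)) (w : MvPolynomial σ k)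
    (hw : w ∈ frobeniusPower I (p ^ e)) :
    ∃ g : FrobIdx k σ p e →₀ MvPolynomial σ k, (∀ x, g x ∈ I) ∧ PhiHom k σ p e g = w := by
  refine Submodule.span_induction ?_ ?_ ?_ ?_ hw
  · rintro _ ⟨y, hy, rfl⟩
    obtain ⟨g₁, hg₁⟩ := PhiHom_surjective (k := k) (σ := σ) (p := p) (e := e) 1
    refine ⟨y • g₁, fun x => ?_, ?_⟩
    · rw [Finsupp.smul_apply, smul_eq_mul]
      exact Ideal.mul_mem_right _ _ hy
    · rw [PhiHom_smul, hg₁, mul_one]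
  · exact ⟨0, fun x => I.zero_mem, map_zero _⟩
  · rintro x y hx hy ⟨gx, hgx, hgx'⟩ ⟨gy, hgy, hgy'⟩
    exact ⟨gx + gy, fun x => by rw [Finsupp.add_apply]; exact I.add_mem (hgx x) (hgy x),
      by rw [map_add, hgx', hgy']⟩
  · rintro a x hx ⟨g, hg, hg'⟩
    obtain ⟨g', hg'I, hg''⟩ := PhiHom_smul_rep I a g hg
    exact ⟨g', hg'I, by rw [hg'', hg', smul_eq_mul]⟩

/-- Tight closure is trivial in a polynomial ring over a field of characteristic `p`. -/
theorem mem_of_mul_pow_mem [Finite σ] (I : Ideal (MvPolynomial σ k)) (z c : MvPolynomial σ k)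
    (hc : c ≠ 0) (N : ℕ) (H : ∀ e ≥ N, c * z ^ p ^ e ∈ frobeniusPower I (p ^ e)) : z ∈ I := by
  by_contra hz
  set K := I.colon (Ideal.span {z}) with hK
  have hKtop : K ≠ ⊤ := by
    intro h
    refine hz ?_
    have h1 : (1 : MvPolynomial σ k) ∈ K := h ▸ Submodule.mem_top
    have := Ideal.mem_colon_span_singleton.mp h1
    rwa [one_mul] at this
  obtain ⟨m, hm, hKm⟩ := Ideal.exists_le_maximal K hKtop
  have hcm : ∀ e ≥ N, c ∈ m ^ p ^ e := by
    intro e he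
    obtain ⟨g, hgI, hgPhi⟩ := rep_of_mem_frobPow (e := e) I _ (H e he)
    obtain ⟨g₀, hg₀⟩ := PhiHom_surjective (k := k) (σ := σ) (p := p) (e := e) c
    have heq : PhiHom k σ p e (z • g₀) = PhiHom k σ p e g := by
      rw [PhiHom_smul, hg₀, hgPhi, mul_comm]
    have hzg : z • g₀ = g := PhiHom_injective heq
    have hg₀m : ∀ x, g₀ x ∈ m := by
      intro x
      apply hKm
      rw [hK]
      apply Ideal.mem_colon_span_singleton.mpr
      rw [mul_comm]
      have : z * g₀ x = g x := by rw [← hzg, Finsupp.smul_apply, smul_eq_mul]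
      rw [this]
      exact hgI x
    rw [← hg₀, PhiHom_apply, Finsupp.sum]
    apply Ideal.sum_mem
    intro x _
    exact Ideal.mul_mem_right _ _ (Ideal.pow_mem_pow (hg₀m x) _)
  have hcinf : c ∈ ⨅ n : ℕ, m ^ n := by
    rw [Submodule.mem_iInf]
    intro n
    have h1 : n ≤ p ^ max N n :=
      le_trans (le_max_right N n) (le_of_lt (Nat.lt_pow_self (Fact.out : p.Prime).one_lt))
    exact Ideal.pow_le_pow_right h1 (hcm (max N n) (le_max_left N n))
  have hbot := Ideal.iInf_pow_eq_bot_of_isDomain (I := m) (Ideal.IsMaximal.ne_top hm)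
  rw [hbot] at hcinf
  exact hc (Submodule.mem_bot _ |>.mp hcinf)

end KeyLemma

section MonomialPrimes

variable {k : Type*} [Field k] {σ : Type*}

open scoped Classical in
/-- The algebra hom killing the variables in `A`. -/
noncomputable def killA (A : Set σ) : MvPolynomial σ k →ₐ[k] MvPolynomial {i : σ // i ∉ A} k :=
  aeval (fun i => if h : i ∈ A then 0 else X ⟨i, h⟩)

lemma killA_X_mem {A : Set σ} {i : σ} (h : i ∈ A) : killA (k := k) A (X i) = 0 := by
  simp [killA, h]

lemma killA_X_not_mem {A : Set σ} {i : σ} (h : i ∉ A) : killA (k := k) A (X i) = X ⟨i, h⟩ := by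
  simp [killA, h]

lemma killA_surjective (A : Set σ) : Function.Surjective (killA (k := k) A) := by
  intro f
  refine ⟨rename Subtype.val f, ?_⟩
  induction f using MvPolynomial.induction_on with
  | C a => rw [rename_C, killA, aeval_C]; rfl
  | add f g hf hg => rw [map_add, map_add, hf, hg]
  | mul_X f i hf =>
    rw [map_mul, map_mul, hf, rename_X, killA_X_not_mem i.2]

lemma sub_killA_mem (A : Set σ) (f : MvPolynomial σ k) :
    f - rename Subtype.val (killA (k := k) A f)
      ∈ Ideal.span ((fun i => (X i : MvPolynomial σ k)) '' A) := by
  induction f using MvPolynomial.induction_on with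
  | C a =>
    rw [killA, aeval_C,
      show (algebraMap k (MvPolynomial {i : σ // i ∉ A} k)) a = C a from rfl, rename_C, sub_self]
    exact Ideal.zero_mem _
  | add f g hf hg =>
    rw [map_add, map_add]
    have := Ideal.add_mem _ hf hg
    convert this using 1
    ring
  | mul_X f i hf =>
    by_cases h : i ∈ A
    · rw [map_mul, killA_X_mem h, mul_zero, map_zero, sub_zero]
      exact Ideal.mul_mem_left _ f (Ideal.subset_span ⟨i, h, rfl⟩)
    · rw [map_mul, killA_X_not_mem h, map_mul, rename_X]
      have := Ideal.mul_mem_right (X i) _ hf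
      convert this using 1
      show f * X i - rename Subtype.val (killA A f) * X ((⟨i, h⟩ : {i : σ // i ∉ A}) : σ) = _
      ring
  
lemma killA_eq_zero_iff (A : Set σ) (f : MvPolynomial σ k) :
    killA (k := k) A f = 0 ↔ f ∈ Ideal.span ((fun i => (X i : MvPolynomial σ k)) '' A) := by
  constructor
  · intro h
    have := sub_killA_mem A f
    rwa [h, map_zero, sub_zero] at this
  · intro h
    have hle : Ideal.span ((fun i => (X i : MvPolynomial σ k)) '' A)
        ≤ RingHom.ker (killA (k := k) A : MvPolynomial σ k →+* MvPolynomial {i : σ // i ∉ A} k) := by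
      rw [Ideal.span_le]
      rintro _ ⟨i, hi, rfl⟩
      exact RingHom.mem_ker.mpr (killA_X_mem hi)
    exact RingHom.mem_ker.mp (hle h)

lemma span_vars_isPrime (A : Set σ) :
    (Ideal.span ((fun i => (X i : MvPolynomial σ k)) '' A)).IsPrime := by
  have h : Ideal.span ((fun i => (X i : MvPolynomial σ k)) '' A)
      = RingHom.ker (killA (k := k) A : MvPolynomial σ k →+* MvPolynomial {i : σ // i ∉ A} k) := by
    ext f
    rw [RingHom.mem_ker]
    exact (killA_eq_zero_iff A f).symm
  rw [h]
  exact RingHom.ker_isPrime _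

lemma minimalPrime_monomial {G : Set (σ →₀ ℕ)} {Q : Ideal (MvPolynomial σ k)}
    (hQ : Q ∈ (Ideal.span ((fun s => monomial s (1 : k)) '' G)).minimalPrimes) :
    Q = Ideal.span ((fun i => (X i : MvPolynomial σ k)) '' {i | X i ∈ Q}) := by
  classical
  obtain ⟨⟨hQp, hJQ⟩, hmin⟩ := hQ
  set V := Ideal.span ((fun i => (X i : MvPolynomial σ k)) '' {i | X i ∈ Q}) with hV
  have hVQ : V ≤ Q := Ideal.span_le.mpr (by rintro _ ⟨i, hi, rfl⟩; exact hi)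
  have hJV : Ideal.span ((fun s => monomial s (1 : k)) '' G) ≤ V := by
    rw [Ideal.span_le]
    rintro _ ⟨s, hs, rfl⟩
    show monomial s (1 : k) ∈ V
    have hmQ : monomial s (1 : k) ∈ Q := hJQ (Ideal.subset_span ⟨s, hs, rfl⟩)
    have hprod : (∏ i ∈ s.support, (X i : MvPolynomial σ k) ^ s i) ∈ Q := by
      rw [monomial_eq, C_1, one_mul, Finsupp.prod] at hmQ
      exact hmQ
    obtain ⟨i, hisupp, hXQ⟩ := (Ideal.IsPrime.prod_mem_iff (hp := hQp)).mp hprod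
    have hXi : (X i : MvPolynomial σ k) ∈ Q := hQp.mem_of_pow_mem _ hXQ
    have hle : Finsupp.single i 1 ≤ s :=
      Finsupp.single_le_iff.mpr (Nat.one_le_iff_ne_zero.mpr (Finsupp.mem_support_iff.mp hisupp))
    have hfact : monomial s (1 : k) = X i * monomial (s - Finsupp.single i 1) 1 := by
      have hXdef : (X i : MvPolynomial σ k) = monomial (Finsupp.single i 1) 1 := rfl
      rw [hXdef, monomial_mul, one_mul, ← add_tsub_assoc_of_le hle, add_tsub_cancel_left]
    rw [hfact]
    exact Ideal.mul_mem_right _ _ (Ideal.subset_span ⟨i, hXi, rfl⟩)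
  exact le_antisymm (hmin ⟨span_vars_isPrime _, hJV⟩ hVQ) hVQ

end MonomialPrimes

section SupDirection

variable {R : Type*} [CommRing R] {p : ℕ} [Fact p.Prime]

lemma frobeniusPower_pow [CharP R p] (I : Ideal R) (q s : ℕ) {v : R}
    (hv : v ∈ frobeniusPower I q) : v ^ p ^ s ∈ frobeniusPower I (q * p ^ s) := by
  have hle : frobeniusPower I q
      ≤ Ideal.comap (iterateFrobenius R p s) (frobeniusPower I (q * p ^ s)) := by
    rw [frobeniusPower, Ideal.span_le]
    rintro _ ⟨y, hy, rfl⟩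
    rw [SetLike.mem_coe, Ideal.mem_comap, iterateFrobenius_def, ← pow_mul]
    exact Ideal.subset_span ⟨y, hy, rfl⟩
  have h2 := hle hv
  rwa [Ideal.mem_comap, iterateFrobenius_def] at h2

lemma inf_subset_tightClosure [IsNoetherianRing R] [CharP R p] (I : Ideal R) :
    ((⨅ P ∈ minimalPrimes R, I ⊔ P : Ideal R) : Set R) ⊆ tightClosureSet p I := by
  classical
  intro z hz
  have hz' : ∀ P ∈ minimalPrimes R, z ∈ I ⊔ P := by
    intro P hP
    have h0 : z ∈ (⨅ P ∈ minimalPrimes R, I ⊔ P : Ideal R) := hz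
    simp only [Submodule.mem_iInf] at h0
    exact h0 P hP
  set s := (minimalPrimes.finite_of_isNoetherianRing R).toFinset with hsdef
  have hmem_s : ∀ P, P ∈ s ↔ P ∈ minimalPrimes R := fun P => Set.Finite.mem_toFinset _
  have hex : ∀ P ∈ s, ∃ c, c ∈ (s.erase P).inf id ∧ c ∉ P := by
    intro P hP
    have hPmin : P ∈ minimalPrimes R := (hmem_s P).mp hP
    by_contra hcon
    push_neg at hcon
    have hle : (s.erase P).inf id ≤ P := fun x hx => hcon x hx
    obtain ⟨Q, hQs, hQP⟩ := (Ideal.IsPrime.inf_le' hPmin.1.1).mp hle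
    have hQmin : Q ∈ minimalPrimes R := (hmem_s Q).mp (Finset.mem_erase.mp hQs).2
    have hPQ : P ≤ Q := hPmin.2 ⟨hQmin.1.1, bot_le⟩ hQP
    exact (Finset.mem_erase.mp hQs).1 (le_antisymm hQP hPQ)
  choose cc hcc1 hcc2 using hex
  set c := ∑ P ∈ s.attach, cc P.1 P.2 with hc
  have hcP : ∀ P ∈ s, c ∉ P := by
    intro P hP hmemP
    have hother : ∀ Q : {x // x ∈ s}, Q.1 ≠ P → cc Q.1 Q.2 ∈ P := by
      intro Q hne
      have hPe : P ∈ s.erase Q.1 := Finset.mem_erase.mpr ⟨fun h => hne h.symm, hP⟩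
      exact (Finset.inf_le hPe : (s.erase Q.1).inf id ≤ P) (hcc1 Q.1 Q.2)
    have hsplit : c = cc P hP + ∑ Q ∈ s.attach.erase ⟨P, hP⟩, cc Q.1 Q.2 := by
      rw [hc, ← Finset.add_sum_erase _ _ (Finset.mem_attach s ⟨P, hP⟩)]
    have hrest : ∑ Q ∈ s.attach.erase ⟨P, hP⟩, cc Q.1 Q.2 ∈ P :=
      Ideal.sum_mem _ (fun Q hQ =>
        hother Q (fun h => (Finset.mem_erase.mp hQ).1 (Subtype.ext h)))
    rw [hsplit] at hmemP
    exact hcc2 P hP ((Ideal.add_mem_iff_left P hrest).mp hmemP)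
  have hnil : ∀ e : ℕ, c * z ^ p ^ e ∈ frobeniusPower I (p ^ e) ⊔ nilradical R := by
    intro e
    rw [hc, Finset.sum_mul]
    apply Ideal.sum_mem
    intro Q _
    obtain ⟨a, haI, b, hbP, hab⟩ := Submodule.mem_sup.mp (hz' Q.1 ((hmem_s Q.1).mp Q.2))
    have hzq : z ^ p ^ e = a ^ p ^ e + b ^ p ^ e := by rw [← hab, add_pow_char_pow]
    rw [hzq, mul_add]
    apply Ideal.add_mem
    · exact Ideal.mem_sup_left (Ideal.mul_mem_left _ _ (Ideal.subset_span ⟨a, haI, rfl⟩))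
    · apply Ideal.mem_sup_right
      have hnilrad : nilradical R = sInf (minimalPrimes R) := by
        rw [minimalPrimes, Ideal.sInf_minimalPrimes]
        rfl
      rw [hnilrad, Submodule.mem_sInf]
      intro P' hP'
      by_cases hPQ : P' = Q.1
      · subst hPQ
        exact Ideal.mul_mem_left _ _
          (Ideal.pow_mem_of_mem _ hbP _ (Nat.pow_pos (n := e) (Fact.out : p.Prime).pos))
      · have hP's : P' ∈ s.erase Q.1 :=
          Finset.mem_erase.mpr ⟨hPQ, (hmem_s P').mpr hP'⟩
        exact Ideal.mul_mem_right _ _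
          ((Finset.inf_le hP's : (s.erase Q.1).inf id ≤ P') (hcc1 Q.1 Q.2))
  obtain ⟨M, hM⟩ := IsNoetherianRing.isNilpotent_nilradical R
  refine ⟨c ^ p ^ M, ?_, M, ?_⟩
  · intro P hP hmem
    exact hcP P ((hmem_s P).mpr hP) (hP.1.1.mem_of_pow_mem _ hmem)
  · intro e he
    obtain ⟨v, hv, n, hn, hvn⟩ := Submodule.mem_sup.mp (hnil (e - M))
    have hn0 : n ^ p ^ M = 0 := by
      have h2 : n ^ M = 0 := by
        have h3 := Ideal.pow_mem_pow hn M
        rw [hM] at h3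
        exact (Submodule.mem_bot R).mp h3
      have hM' : M ≤ p ^ M := le_of_lt (Nat.lt_pow_self (Fact.out : p.Prime).one_lt)
      calc n ^ p ^ M = n ^ M * n ^ (p ^ M - M) := by rw [← pow_add]; congr 1; omega
        _ = 0 := by rw [h2, zero_mul]
    have hkey : (c * z ^ p ^ (e - M)) ^ p ^ M ∈ frobeniusPower I (p ^ (e - M) * p ^ M) := by
      rw [← hvn, add_pow_char_pow, hn0, add_zero]
      exact frobeniusPower_pow I _ M hv
    have harith : p ^ (e - M) * p ^ M = p ^ e := by rw [← pow_add]; congr 1; omega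
    rw [harith] at hkey
    have hfinal : c ^ p ^ M * z ^ p ^ e = (c * z ^ p ^ (e - M)) ^ p ^ M := by
      rw [mul_pow, ← pow_mul, harith]
    rw [hfinal]
    exact hkey

end SupDirection

/-- In a monomial ring `R = k[x_1,...,x_d]/J` (with `J` a monomial ideal, `k` of prime
characteristic `p`), the tight closure of any ideal `I` is `I* = ∩_P (I + P)`, where `P`
ranges over the minimal primes of `R`. -/
theorem tight_closure_eq_inf_over_minimal_primes
    {k : Type*} [Field k] {p : ℕ} (hp : p.Prime) [CharP k p] {d : ℕ}
    (J : Ideal (MvPolynomial (Fin d) k))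
    (hJ : ∃ G : Set (Fin d →₀ ℕ), J = Ideal.span ((fun s => monomial s (1 : k)) '' G))
    (I : Ideal (MvPolynomial (Fin d) k ⧸ J)) :
    tightClosureSet p I =
      ((⨅ P ∈ minimalPrimes (MvPolynomial (Fin d) k ⧸ J), I ⊔ P :
        Ideal (MvPolynomial (Fin d) k ⧸ J)) : Set (MvPolynomial (Fin d) k ⧸ J)) := by
  haveI : Fact p.Prime := ⟨hp⟩
  apply Set.Subset.antisymm
  · intro z hzt
    obtain ⟨c, hcmin, N, hcz⟩ := hzt
    show z ∈ (⨅ P ∈ minimalPrimes (MvPolynomial (Fin d) k ⧸ J), I ⊔ P :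
      Ideal (MvPolynomial (Fin d) k ⧸ J))
    simp only [Submodule.mem_iInf]
    intro P hP
    set π : MvPolynomial (Fin d) k →+* MvPolynomial (Fin d) k ⧸ J := Ideal.Quotient.mk J with hπ
    have hπsurj : Function.Surjective π := Ideal.Quotient.mk_surjective
    set Q : Ideal (MvPolynomial (Fin d) k) := Ideal.comap π P with hQdef
    have hQmin : Q ∈ J.minimalPrimes := by
      rw [Ideal.minimalPrimes_eq_comap]
      exact ⟨P, hP, rfl⟩
    obtain ⟨G, hG⟩ := hJ
    have hQeq : Q = Ideal.span
        ((fun i => (X i : MvPolynomial (Fin d) k)) '' {i | X i ∈ Q}) :=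
      minimalPrime_monomial (G := G) (by rw [← hG]; exact hQmin)
    set A := {i : Fin d | X i ∈ Q} with hA
    set ψ := killA (k := k) A with hψ
    have hψker : ∀ f, ψ f = 0 ↔ f ∈ Q := by
      intro f
      rw [hψ, killA_eq_zero_iff, ← hQeq]
    obtain ⟨ct, hct⟩ := hπsurj c
    obtain ⟨zt, hzt'⟩ := hπsurj z
    set Itil := Ideal.comap π I with hItil
    have hIfrob : ∀ q : ℕ, frobeniusPower I q = Ideal.map π (frobeniusPower Itil q) := by
      intro q
      apply le_antisymm
      · rw [frobeniusPower, Ideal.span_le]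
        rintro _ ⟨g, hg, rfl⟩
        obtain ⟨y, hy⟩ := hπsurj g
        have hyI : y ∈ Itil := by rw [hItil, Ideal.mem_comap, hy]; exact hg
        have heq : g ^ q = π (y ^ q) := by rw [map_pow, hy]
        show g ^ q ∈ Ideal.map π (frobeniusPower Itil q)
        rw [heq]
        exact Ideal.mem_map_of_mem π (Ideal.subset_span ⟨y, hyI, rfl⟩)
      · rw [Ideal.map_le_iff_le_comap, frobeniusPower, Ideal.span_le]
        rintro _ ⟨y, hy, rfl⟩
        show y ^ q ∈ Ideal.comap π (frobeniusPower I q)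
        rw [Ideal.mem_comap, map_pow]
        exact Ideal.subset_span ⟨π y, hy, rfl⟩
    have hmemS : ∀ e ≥ N, ct * zt ^ p ^ e ∈ frobeniusPower Itil (p ^ e) ⊔ J := by
      intro e he
      have h1 : c * z ^ p ^ e ∈ Ideal.map π (frobeniusPower Itil (p ^ e)) := by
        rw [← hIfrob]; exact hcz e he
      have h2 : π (ct * zt ^ p ^ e) = c * z ^ p ^ e := by rw [map_mul, map_pow, hct, hzt']
      have h3 : ct * zt ^ p ^ e ∈ Ideal.comap π (Ideal.map π (frobeniusPower Itil (p ^ e))) := by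
        rw [Ideal.mem_comap, h2]; exact h1
      rwa [Ideal.comap_map_of_surjective π hπsurj, ← RingHom.ker_eq_comap_bot,
        hπ, Ideal.mk_ker] at h3
    have hψmem : ∀ e ≥ N,
        (ψ ct) * (ψ zt) ^ p ^ e ∈ frobeniusPower (Ideal.map ψ Itil) (p ^ e) := by
      intro e he
      have h2 : Ideal.map ψ (frobeniusPower Itil (p ^ e) ⊔ J)
          ≤ frobeniusPower (Ideal.map ψ Itil) (p ^ e) := by
        rw [Ideal.map_sup, sup_le_iff]
        constructor
        · rw [frobeniusPower, Ideal.map_span, Ideal.span_le]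
          rintro _ ⟨_, ⟨y, hy, rfl⟩, rfl⟩
          exact Ideal.subset_span ⟨ψ y, Ideal.mem_map_of_mem _ hy, (map_pow ψ y _).symm⟩
        · have hJQ' : J ≤ Q := hQmin.1.2
          have hb : Ideal.map ψ J ≤ ⊥ := by
            rw [Ideal.map_le_iff_le_comap]
            intro f hf
            rw [Ideal.mem_comap, Ideal.mem_bot]
            exact (hψker f).mpr (hJQ' hf)
          exact le_trans hb bot_le
      have h3 := Ideal.mem_map_of_mem ψ (hmemS e he)
      have h4 := h2 h3
      rwa [map_mul, map_pow] at h4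
    have hψct : ψ ct ≠ 0 := by
      intro h0
      have hq : ct ∈ Q := (hψker ct).mp h0
      rw [hQdef, Ideal.mem_comap, hct] at hq
      exact hcmin P hP hq
    have hz_in : ψ zt ∈ Ideal.map ψ Itil :=
      mem_of_mul_pow_mem (Ideal.map ψ Itil) (ψ zt) (ψ ct) hψct N hψmem
    have hζ : zt ∈ Ideal.comap ψ (Ideal.map ψ Itil) := by
      rw [Ideal.mem_comap]; exact hz_in
    rw [Ideal.comap_map_of_surjective ψ (killA_surjective A)] at hζ
    have hkerQ : Ideal.comap ψ ⊥ = Q := by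
      ext f
      rw [Ideal.mem_comap, Ideal.mem_bot]
      exact hψker f
    rw [hkerQ] at hζ
    have h5 : π zt ∈ Ideal.map π (Itil ⊔ Q) := Ideal.mem_map_of_mem π hζ
    rw [Ideal.map_sup, hItil, Ideal.map_comap_of_surjective π hπsurj,
      hQdef, Ideal.map_comap_of_surjective π hπsurj, hzt'] at h5
    exact h5
  · rcases subsingleton_or_nontrivial (MvPolynomial (Fin d) k ⧸ J) with hsub | hnt
    · intro z _
      refine ⟨0, ?_, 0, ?_⟩
      · intro P hP _
        exact hP.1.1.ne_top (Subsingleton.elim P ⊤)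
      · intro e _
        rw [zero_mul]
        exact Ideal.zero_mem _
    · haveI : CharP (MvPolynomial (Fin d) k ⧸ J) p := by
        have hinj : Function.Injective
            ((Ideal.Quotient.mk J).comp (C : k →+* MvPolynomial (Fin d) k)) :=
          RingHom.injective _
        exact charP_of_injective_ringHom hinj p
      exact inf_subset_tightClosure I
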